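/- Consider smooth functions r(s) > 0, θ(s), t(s) solving the ODE system t'(s) = −2r(s)cos θ(s), θ'(s) = −(2c r³(s)/3 + φ₀)/r²(s), subject to the constraint (c/3)r³(s) − r(s)cos θ(s) = φ₀ with constants c > 0 and φ₀ > 0, defined for all s ≥ 0. Then for any s₁ < s₂ with θ(s₁) − θ(s₂) = 2π, the drop t(s₂) − t(s₁) = −(2/c)∫_{θ(s₂)}^{θ(s₁)} R(cos σ)cos²σ/((2c/3)R³(cos σ) + φ₀) dσ < 0 is a constant independent of s₁, s₂ (where R(·) is the function implicitly determined by the constraint, so that r(s) = R(cos θ(s))); consequently t(s) → −∞ as s → ∞. -/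

import Mathlib

open scoped BigOperators
open intervalIntegral

/-- ODE analysis along an integral curve of η for the characterization of
gauge balls in ℍ¹: given smooth r > 0, θ, t with t' = −2r cos θ,
θ' = −(2cr³/3 + φ₀)/r², constraint (c/3)r³ − r cos θ = φ₀ with c > 0, φ₀ > 0, and
r(s) = R(cos θ(s)) for a continuous R, then over any window with θ(s₁) − θ(s₂) = 2π the
drop t(s₂) − t(s₁) equals the (negative) integral
−(2/c)∫ R(cos σ)cos²σ/((2c/3)R(cos σ)³ + φ₀) dσ, is independent of the window, and
consequently t(s) → −∞ as s → ∞. -/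
theorem heisenberg_ode_drop (c φ₀ : ℝ) (hc : 0 < c) (hφ : 0 < φ₀)
    (r θ t R : ℝ → ℝ)
    (hr : Differentiable ℝ r) (hθ : Differentiable ℝ θ) (ht : Differentiable ℝ t)
    (hRc : Continuous R)
    (hrpos : ∀ s, 0 ≤ s → 0 < r s)
    (ht' : ∀ s, 0 ≤ s → deriv t s = -2 * r s * Real.cos (θ s))
    (hθ' : ∀ s, 0 ≤ s → deriv θ s = -((2 * c * (r s) ^ 3 / 3 + φ₀) / (r s) ^ 2))
    (hcon : ∀ s, 0 ≤ s → c / 3 * (r s) ^ 3 - r s * Real.cos (θ s) = φ₀)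
    (hR : ∀ s, 0 ≤ s → r s = R (Real.cos (θ s))) :
    (∀ s₁ s₂, 0 ≤ s₁ → s₁ < s₂ → θ s₁ - θ s₂ = 2 * Real.pi →
      t s₂ - t s₁
        = -(2 / c) * ∫ σ in (θ s₂)..(θ s₁),
            R (Real.cos σ) * (Real.cos σ) ^ 2
              / ((2 * c / 3) * (R (Real.cos σ)) ^ 3 + φ₀) ∧
      t s₂ - t s₁ < 0) ∧
    (∀ s₁ s₂ s₁' s₂', 0 ≤ s₁ → s₁ < s₂ → 0 ≤ s₁' → s₁' < s₂' →
      θ s₁ - θ s₂ = 2 * Real.pi → θ s₁' - θ s₂' = 2 * Real.pi →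
      t s₂ - t s₁ = t s₂' - t s₁') ∧
    Filter.Tendsto t Filter.atTop Filter.atBot := by
  have hπ : (0:ℝ) < Real.pi := Real.pi_pos
  -- a uniform negative bound on θ'
  set m : ℝ := min (2 * c / 3) φ₀ with hmdef
  have hm : 0 < m := lt_min (by positivity) hφ
  have hθle : ∀ s, 0 ≤ s → deriv θ s ≤ -m := by
    intro s hs
    rw [hθ' s hs]
    have hrs := hrpos s hs
    have key : m ≤ (2 * c * (r s) ^ 3 / 3 + φ₀) / (r s) ^ 2 := by
      rw [le_div_iff₀ (by positivity)]
      rcases le_total 1 (r s) with h1 | h1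
      · have hm1 : m ≤ 2 * c / 3 := min_le_left _ _
        have e1 : m * (r s) ^ 2 ≤ 2 * c / 3 * (r s) ^ 2 :=
          mul_le_mul_of_nonneg_right hm1 (sq_nonneg _)
        have e2 : (r s) ^ 2 ≤ (r s) ^ 3 := by nlinarith
        have e3 : 2 * c / 3 * (r s) ^ 2 ≤ 2 * c / 3 * (r s) ^ 3 :=
          mul_le_mul_of_nonneg_left e2 (by positivity)
        linarith
      · have hm2 : m ≤ φ₀ := min_le_right _ _
        have e1 : m * (r s) ^ 2 ≤ φ₀ * (r s) ^ 2 :=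
          mul_le_mul_of_nonneg_right hm2 (sq_nonneg _)
        have hr2 : (r s) ^ 2 ≤ 1 := by nlinarith
        have e2 : φ₀ * (r s) ^ 2 ≤ φ₀ := by nlinarith [hr2, hφ.le]
        have e3 : 0 < 2 * c * (r s) ^ 3 / 3 := by positivity
        linarith
    linarith
  -- θ decays at least linearly
  have hθbound : ∀ s, 0 ≤ s → θ s ≤ θ 0 - m * s := by
    intro s hs
    have hanti : AntitoneOn (fun u => θ u + m * u) (Set.Ici 0) := by
      apply antitoneOn_of_deriv_nonpos (convex_Ici 0)
      · exact (hθ.continuous.add (continuous_const.mul continuous_id)).continuousOn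
      · intro x _
        exact ((hθ x).add ((differentiable_id.const_mul m) x)).differentiableWithinAt
      · intro x hx
        rw [interior_Ici] at hx
        have hd : HasDerivAt (fun u => θ u + m * u) (deriv θ x + m * 1) x :=
          (hθ x).hasDerivAt.add ((hasDerivAt_id x).const_mul m)
        rw [hd.deriv]
        have := hθle x hx.le
        linarith
    have h := hanti (Set.self_mem_Ici) hs hs
    simp only [mul_zero, add_zero] at h
    linarith
  have hθbot : Filter.Tendsto θ Filter.atTop Filter.atBot := by
    apply Filter.tendsto_atBot_mono' Filter.atTop
      (f₁ := fun s => θ 0 - m * s)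
    · filter_upwards [Filter.eventually_ge_atTop (0:ℝ)] with s hs using hθbound s hs
    · have h1 : Filter.Tendsto (fun s : ℝ => m * s) Filter.atTop Filter.atTop :=
        Filter.Tendsto.const_mul_atTop hm Filter.tendsto_id
      have h2 : Filter.Tendsto (fun s : ℝ => -(m * s)) Filter.atTop Filter.atBot :=
        Filter.tendsto_neg_atTop_atBot.comp h1
      simpa [sub_eq_add_neg] using Filter.tendsto_atBot_add_const_left _ (θ 0) h2
  -- surjectivity of cos ∘ θ onto [-1,1]
  have hcos_surj : ∀ x ∈ Set.Icc (-1:ℝ) 1, ∃ s, 0 ≤ s ∧ Real.cos (θ s) = x := by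
    intro x hx
    set S : ℝ := (2 * Real.pi + 1) / m with hSdef
    have hS0 : (0:ℝ) ≤ S := by positivity
    have hθS : θ S ≤ θ 0 - (2 * Real.pi + 1) := by
      have h1 := hθbound S hS0
      have h2 : m * S = 2 * Real.pi + 1 := by
        rw [hSdef, mul_div_cancel₀ _ hm.ne']
      linarith
    set σ₀ : ℝ := Real.arccos x with hσ₀def
    set k : ℤ := ⌈(σ₀ - θ 0) / (2 * Real.pi)⌉ with hkdef
    have hk1 : (σ₀ - θ 0) / (2 * Real.pi) ≤ (k:ℝ) := Int.le_ceil _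
    have hk2 : (k:ℝ) < (σ₀ - θ 0) / (2 * Real.pi) + 1 := Int.ceil_lt_add_one _
    set σ : ℝ := σ₀ - (k:ℝ) * (2 * Real.pi) with hσdef
    have h2π : (0:ℝ) < 2 * Real.pi := by positivity
    have hσ_le : σ ≤ θ 0 := by
      have := (div_le_iff₀ h2π).mp hk1
      rw [hσdef]; nlinarith
    have hσ_ge : θ 0 - 2 * Real.pi < σ := by
      have h1 : ((k:ℝ) - 1) < (σ₀ - θ 0) / (2 * Real.pi) := by linarith
      have h2 := (lt_div_iff₀ h2π).mp h1
      rw [hσdef]; nlinarith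
    have hmem : σ ∈ Set.Icc (θ S) (θ 0) := ⟨by linarith, hσ_le⟩
    have hsub := intermediate_value_Icc' hS0 hθ.continuous.continuousOn
    obtain ⟨s, hs, hθs⟩ := hsub hmem
    refine ⟨s, hs.1, ?_⟩
    rw [hθs, hσdef, Real.cos_sub_int_mul_two_pi, hσ₀def, Real.cos_arccos hx.1 hx.2]
  -- the constraint holds for R on [-1,1]
  have hconR : ∀ x ∈ Set.Icc (-1:ℝ) 1, 0 < R x ∧ c / 3 * (R x) ^ 3 - R x * x = φ₀ := by
    intro x hx
    obtain ⟨s, hs, hcs⟩ := hcos_surj x hx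
    have h1 := hrpos s hs
    have h2 := hcon s hs
    have h3 := hR s hs
    constructor
    · rw [← hcs, ← h3]; exact h1
    · rw [← hcs, ← h3]; exact h2
  have hRpos : ∀ σ : ℝ, 0 < R (Real.cos σ) := fun σ =>
    (hconR _ ⟨Real.neg_one_le_cos σ, Real.cos_le_one σ⟩).1
  have hconσ : ∀ σ : ℝ, c / 3 * (R (Real.cos σ)) ^ 3 - R (Real.cos σ) * Real.cos σ = φ₀ :=
    fun σ => (hconR _ ⟨Real.neg_one_le_cos σ, Real.cos_le_one σ⟩).2
  have hden : ∀ σ : ℝ, 0 < 2 * c / 3 * (R (Real.cos σ)) ^ 3 + φ₀ := by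
    intro σ
    have := hRpos σ
    positivity
  -- the integrands
  set I : ℝ → ℝ := fun σ =>
    R (Real.cos σ) * (Real.cos σ) ^ 2 / (2 * c / 3 * (R (Real.cos σ)) ^ 3 + φ₀) with hIdef
  set g : ℝ → ℝ := fun σ =>
    2 * (R (Real.cos σ)) ^ 3 * Real.cos σ / (2 * c / 3 * (R (Real.cos σ)) ^ 3 + φ₀) with hgdef
  have hgc : Continuous g := by
    apply Continuous.div
    · fun_prop
    · fun_prop
    · intro σ; exact (hden σ).ne'
  have hIc : Continuous I := by
    apply Continuous.div
    · fun_prop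
    · fun_prop
    · intro σ; exact (hden σ).ne'
  have hgint : ∀ a b : ℝ, IntervalIntegrable g MeasureTheory.volume a b := fun a b =>
    hgc.intervalIntegrable a b
  have hIint : ∀ a b : ℝ, IntervalIntegrable I MeasureTheory.volume a b := fun a b =>
    hIc.intervalIntegrable a b
  -- the key pointwise identity
  have hgI : ∀ σ : ℝ, g σ = 2 / c * I σ + 2 / c * Real.cos σ := by
    intro σ
    have hD := hden σ
    have hcon' := hconσ σ
    simp only [hgdef, hIdef]
    have hkey : 2 * (R (Real.cos σ)) ^ 3 * Real.cos σ
        = 2 / c * (R (Real.cos σ) * (Real.cos σ) ^ 2)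
          + 2 / c * Real.cos σ * (2 * c / 3 * (R (Real.cos σ)) ^ 3 + φ₀) := by
      rw [← hcon']; field_simp; ring
    rw [hkey, add_div, mul_div_cancel_right₀ _ hD.ne', mul_div_assoc]
  -- primitive of g
  set Φ : ℝ → ℝ := fun x => ∫ σ in (0:ℝ)..x, g σ with hΦdef
  have hΦd : ∀ x : ℝ, HasDerivAt Φ (g x) x := fun x =>
    (hgc.integral_hasStrictDerivAt 0 x).hasDerivAt
  have hΦsub : ∀ a b : ℝ, Φ b - Φ a = ∫ σ in a..b, g σ := by
    intro a b
    have := intervalIntegral.integral_add_adjacent_intervals (hgint 0 a) (hgint a b)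
    simp only [hΦdef]
    linarith [this]
  -- F = t - Φ ∘ θ is constant on [0, ∞)
  set F : ℝ → ℝ := fun s => t s - Φ (θ s) with hFdef
  have hFd : ∀ s : ℝ, HasDerivAt F (deriv t s - g (θ s) * deriv θ s) s := by
    intro s
    exact (ht s).hasDerivAt.sub (((hΦd (θ s)).comp s (hθ s).hasDerivAt))
  have hF0 : ∀ s, 0 ≤ s → deriv F s = 0 := by
    intro s hs
    rw [(hFd s).deriv, ht' s hs, hθ' s hs]
    simp only [hgdef]
    rw [← hR s hs]
    have h1 : (0:ℝ) < r s := hrpos s hs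
    have h2 : (0:ℝ) < 2 * c / 3 * (r s) ^ 3 + φ₀ := by positivity
    field_simp
    ring
  have hFconst : ∀ s₁ s₂, 0 ≤ s₁ → s₁ ≤ s₂ → F s₁ = F s₂ := by
    intro s₁ s₂ hs₁ hle
    have hFdiff : ∀ x : ℝ, DifferentiableAt ℝ F x := fun x => (hFd x).differentiableAt
    have hcont : ContinuousOn F (Set.Ici 0) := (fun x _ => (hFdiff x).continuousAt.continuousWithinAt)
    have hdiff : DifferentiableOn ℝ F (interior (Set.Ici 0)) :=
      fun x _ => (hFdiff x).differentiableWithinAt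
    have h0 : ∀ x ∈ interior (Set.Ici (0:ℝ)), deriv F x = 0 := by
      intro x hx; rw [interior_Ici] at hx; exact hF0 x hx.le
    have hmono : MonotoneOn F (Set.Ici 0) :=
      monotoneOn_of_deriv_nonneg (convex_Ici 0) hcont hdiff (fun x hx => le_of_eq (h0 x hx).symm)
    have hanti : AntitoneOn F (Set.Ici 0) :=
      antitoneOn_of_deriv_nonpos (convex_Ici 0) hcont hdiff (fun x hx => le_of_eq (h0 x hx))
    have hs₂ : (0:ℝ) ≤ s₂ := le_trans hs₁ hle
    exact le_antisymm (hmono hs₁ hs₂ hle) (hanti hs₁ hs₂ hle)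
  have hdrop : ∀ s₁ s₂, 0 ≤ s₁ → s₁ ≤ s₂ →
      t s₂ - t s₁ = ∫ σ in (θ s₁)..(θ s₂), g σ := by
    intro s₁ s₂ hs₁ hle
    have h1 := hFconst s₁ s₂ hs₁ hle
    simp only [hFdef] at h1
    have h2 : t s₂ - t s₁ = Φ (θ s₂) - Φ (θ s₁) := by linarith
    rw [h2, hΦsub]
  -- the period integral
  set P : ℝ := ∫ σ in (0:ℝ)..(2 * Real.pi), g σ with hPdef
  have hgper : Function.Periodic g (2 * Real.pi) := by
    intro σ; simp only [hgdef, Real.cos_add_two_pi]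
  have hwindow : ∀ a : ℝ, (∫ σ in a..(a + 2 * Real.pi), g σ) = P := by
    intro a
    have := hgper.intervalIntegral_add_eq a 0
    simpa [hPdef] using this
  -- relating ∫ g to ∫ I over sine-matching windows
  have hgIint : ∀ a b : ℝ, Real.sin b = Real.sin a →
      (∫ σ in a..b, g σ) = 2 / c * ∫ σ in a..b, I σ := by
    intro a b hsin
    have h1 : (∫ σ in a..b, g σ)
        = ∫ σ in a..b, (2 / c * I σ + 2 / c * Real.cos σ) :=
      intervalIntegral.integral_congr (fun σ _ => hgI σ)
    rw [h1, integral_add ((hIint a b).const_mul _)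
        ((Real.continuous_cos.intervalIntegrable a b).const_mul _),
      integral_const_mul, integral_const_mul, integral_cos, hsin]
    ring
  -- positivity of the period integral of I
  have hInonneg : ∀ σ : ℝ, 0 ≤ I σ := by
    intro σ
    have := hRpos σ
    have := hden σ
    positivity
  have hIposint : 0 < ∫ σ in (0:ℝ)..(2 * Real.pi), I σ := by
    have hsplit := intervalIntegral.integral_add_adjacent_intervals
      (hIint 0 (Real.pi / 2)) (hIint (Real.pi / 2) (2 * Real.pi))
    have h1 : 0 < ∫ σ in (0:ℝ)..(Real.pi / 2), I σ := by
      apply intervalIntegral.intervalIntegral_pos_of_pos_on (hIint 0 (Real.pi / 2))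
      · intro σ hσ
        have hcosσ : 0 < Real.cos σ :=
          Real.cos_pos_of_mem_Ioo ⟨by linarith [hσ.1], hσ.2⟩
        have hRσ := hRpos σ
        have hDσ := hden σ
        simp only [hIdef]
        positivity
      · positivity
    have h2 : 0 ≤ ∫ σ in (Real.pi / 2)..(2 * Real.pi), I σ :=
      intervalIntegral.integral_nonneg (by linarith) (fun u _ => hInonneg u)
    linarith [hsplit]
  have hP : 0 < P := by
    rw [hPdef, hgIint 0 (2 * Real.pi) (by rw [Real.sin_two_pi, Real.sin_zero])]
    have : (0:ℝ) < 2 / c := by positivity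
    positivity
  -- the drop over any 2π-window equals -P
  have hdropP : ∀ s₁ s₂, 0 ≤ s₁ → s₁ < s₂ → θ s₁ - θ s₂ = 2 * Real.pi →
      t s₂ - t s₁ = -P := by
    intro s₁ s₂ hs₁ hlt h2π
    have hb : θ s₁ = θ s₂ + 2 * Real.pi := by linarith
    rw [hdrop s₁ s₂ hs₁ hlt.le, intervalIntegral.integral_symm (θ s₂) (θ s₁), hb, hwindow (θ s₂)]
  refine ⟨?_, ?_, ?_⟩
  · -- part 1
    intro s₁ s₂ hs₁ hlt h2π
    have hb : θ s₁ = θ s₂ + 2 * Real.pi := by linarith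
    constructor
    · have h1 := hdrop s₁ s₂ hs₁ hlt.le
      rw [h1, intervalIntegral.integral_symm (θ s₂) (θ s₁)]
      rw [hgIint (θ s₂) (θ s₁) (by rw [hb, Real.sin_add_two_pi])]
      simp only [hIdef]
      ring
    · rw [hdropP s₁ s₂ hs₁ hlt h2π]
      linarith
  · -- part 2
    intro s₁ s₂ s₁' s₂' hs₁ hlt hs₁' hlt' h2π h2π'
    rw [hdropP s₁ s₂ hs₁ hlt h2π, hdropP s₁' s₂' hs₁' hlt' h2π']
  · -- part 3: t → -∞
    set q : ℝ := P / (2 * Real.pi) with hqdef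
    have hq : 0 < q := by positivity
    set ψ : ℝ → ℝ := fun x => Φ x - q * x with hψdef
    have hψper : Function.Periodic ψ (2 * Real.pi) := by
      intro x
      have h1 : Φ (x + 2 * Real.pi) - Φ x = P := by
        rw [hΦsub x (x + 2 * Real.pi)]; exact hwindow x
      have h2 : q * (2 * Real.pi) = P := by
        rw [hqdef, div_mul_cancel₀ _ (by positivity)]
      simp only [hψdef]
      have : q * (x + 2 * Real.pi) = q * x + q * (2 * Real.pi) := by ring
      rw [this, h2]
      linarith
    have hψc : Continuous ψ := by
      have hΦc : Continuous Φ := by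
        have : Differentiable ℝ Φ := fun x => (hΦd x).differentiableAt
        exact this.continuous
      fun_prop
    obtain ⟨B, hB⟩ := (isCompact_Icc (a := (0:ℝ)) (b := 2 * Real.pi)).exists_bound_of_continuousOn
      hψc.continuousOn
    have hψbound : ∀ x : ℝ, ψ x ≤ B := by
      intro x
      obtain ⟨y, hy, hxy⟩ := hψper.exists_mem_Ico₀ (by positivity) x
      calc ψ x = ψ y := hxy
        _ ≤ |ψ y| := le_abs_self _
        _ ≤ B := by simpa using hB y ⟨hy.1, hy.2.le⟩
    have hΦbound : ∀ x : ℝ, Φ x ≤ B + q * x := by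
      intro x
      have := hψbound x
      simp only [hψdef] at this
      linarith
    have htbound : ∀ s, 0 ≤ s → t s ≤ (t 0 - Φ (θ 0) + B) + q * θ s := by
      intro s hs
      have h1 := hFconst 0 s le_rfl hs
      simp only [hFdef] at h1
      have h2 := hΦbound (θ s)
      linarith
    have hlin : Filter.Tendsto (fun s => (t 0 - Φ (θ 0) + B) + q * θ s)
        Filter.atTop Filter.atBot := by
      apply Filter.tendsto_atBot_add_const_left
      exact Filter.Tendsto.const_mul_atBot hq hθbot
    apply Filter.tendsto_atBot_mono' Filter.atTop
      (f₁ := fun s => (t 0 - Φ (θ 0) + B) + q * θ s)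
    · filter_upwards [Filter.eventually_ge_atTop (0:ℝ)] with s hs using htbound s hs
    · exact hlin
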